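/- arXiv:1301.4315 — 3 statements merged into one kernel-verified Lean document; each statement's English description precedes it below -/
import Mathlib

section
/- For every integer n ≥ 1, the function g_n : (0,1) → ℝ defined by g_n(p) = (1 − (1−p)^n)/(p(1−p)^n) is convex on the open interval (0,1). -/
lemma term_convex (k : ℕ) :
    ConvexOn ℝ (Set.Ioo (0 : ℝ) 1) (fun p : ℝ => (1 - p) ^ (-(k + 1) : ℤ)) := by
  have h := (convexOn_zpow (𝕜 := ℝ) (-(k + 1) : ℤ)).comp_affineMap
    (AffineMap.lineMap (1 : ℝ) (0 : ℝ))
  have hpre : Set.Ioo (0 : ℝ) 1 ⊆ (AffineMap.lineMap (1 : ℝ) (0 : ℝ)) ⁻¹' Set.Ioi 0 := by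
    intro p hp
    simp [AffineMap.lineMap_apply]
    linarith [hp.2]
  have := h.subset hpre (convex_Ioo 0 1)
  refine this.congr fun p _ => ?_
  simp [Function.comp, AffineMap.lineMap_apply]
  ring_nf

/-- For every integer `n ≥ 1`, the function `g_n(p) = (1 − (1−p)^n)/(p(1−p)^n)`
is convex on the open interval `(0,1)`. -/
theorem csma_collision_convex (n : ℕ) (hn : 1 ≤ n) :
    ConvexOn ℝ (Set.Ioo (0 : ℝ) 1)
      (fun p : ℝ => (1 - (1 - p) ^ n) / (p * (1 - p) ^ n)) := by
  have hsum : ∀ m : ℕ, ConvexOn ℝ (Set.Ioo (0 : ℝ) 1)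
      (fun p : ℝ => ∑ k ∈ Finset.range m, (1 - p) ^ (-(k + 1) : ℤ)) := by
    intro m
    induction m with
    | zero => simpa using convexOn_const (0 : ℝ) (convex_Ioo 0 1)
    | succ m ih =>
      exact (ih.add (term_convex m)).congr (fun p _ => by simp [Finset.sum_range_succ])
  have hsum := hsum n
  refine hsum.congr fun p hp => ?_
  obtain ⟨hp0, hp1⟩ := hp
  have hq0 : (1 : ℝ) - p > 0 := by linarith
  have hqn : ((1 : ℝ) - p) ^ n ≠ 0 := pow_ne_zero _ (ne_of_gt hq0)
  have key : ∀ k ∈ Finset.range n, (1 - p) ^ (-(k + 1) : ℤ) = ((1 - p) ^ (k + 1))⁻¹ := by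
    intro k _
    rw [zpow_neg, ← zpow_natCast]
    push_cast
    ring_nf
  beta_reduce
  rw [Finset.sum_congr rfl key]
  -- multiply through
  have : (∑ k ∈ Finset.range n, ((1 - p) ^ (k + 1))⁻¹) * (p * (1 - p) ^ n)
      = 1 - (1 - p) ^ n := by
    rw [Finset.sum_mul]
    have step : ∀ k ∈ Finset.range n,
        ((1 - p) ^ (k + 1))⁻¹ * (p * (1 - p) ^ n)
          = (1 - p) ^ (n - (k + 1)) - (1 - p) ^ (n - k) := by
      intro k hk
      rw [Finset.mem_range] at hk
      have h1 : n - k = (n - (k + 1)) + 1 := by omega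
      have h2 : (1 - p) ^ n = (1 - p) ^ (k + 1) * (1 - p) ^ (n - (k + 1)) := by
        rw [← pow_add]; congr 1; omega
      rw [h2, h1, pow_succ]
      field_simp
      ring
    rw [Finset.sum_congr rfl step]
    have := Finset.sum_range_sub (fun k => (1 - p) ^ (n - k)) n
    rw [show (∑ x ∈ Finset.range n, ((1 - p) ^ (n - (x + 1)) - (1 - p) ^ (n - x)))
        = ∑ x ∈ Finset.range n, ((1 - p) ^ (n - (x + 1)) - (1 - p) ^ (n - x)) from rfl,
      Finset.sum_congr rfl (fun x _ => rfl)]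
    calc ∑ x ∈ Finset.range n, ((1 - p) ^ (n - (x + 1)) - (1 - p) ^ (n - x))
        = (1 - p) ^ (n - n) - (1 - p) ^ (n - 0) := Finset.sum_range_sub (fun k => (1 - p) ^ (n - k)) n
      _ = 1 - (1 - p) ^ n := by simp
  field_simp at this ⊢
  linarith [this]
end

section
/- Fix an integer L ≥ 1, positive real constants δ_idle, δ_coll, δ_succ, and a real number M ≥ 0. Then the function p ↦ M·(δ_idle/(L p) + (1/(L p (1−p)^{L−1}) − 1/(L p) − 1)·δ_coll + δ_succ) is convex on the open interval (0,1). (This is the convexity-in-p part of the paper's Lemma 1 for the asymptotic expected contention-period duration T_COP(M,p).) -/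
open Set Finset

private lemma geom_aux (p : ℝ) (hp : p ≠ 0) (hp1 : (1:ℝ) - p ≠ 0) (k : ℕ) :
    ∑ j ∈ Finset.range k, ((1-p)⁻¹)^(j+1) = (((1-p)⁻¹)^k - 1)/p := by
  induction k with
  | zero => simp
  | succ n ih =>
      rw [Finset.sum_range_succ, ih]
      have hx : (1-p)⁻¹ - 1 = p * (1-p)⁻¹ := by field_simp; ring
      field_simp
      linear_combination -(1-p)⁻¹ ^ n * hx

private lemma conv_inv_pow (m : ℕ) :
    ConvexOn ℝ (Set.Ioo (0:ℝ) 1) (fun p : ℝ => ((1-p)⁻¹)^(m+1)) := by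
  have g : ℝ →ᵃ[ℝ] ℝ := AffineMap.const ℝ ℝ (1:ℝ) - AffineMap.id ℝ ℝ
  have h := (convexOn_zpow (𝕜 := ℝ) (-(m+1) : ℤ)).comp_affineMap
      (AffineMap.const ℝ ℝ (1:ℝ) - AffineMap.id ℝ ℝ)
  have hsub : Set.Ioo (0:ℝ) 1 ⊆ (AffineMap.const ℝ ℝ (1:ℝ) - AffineMap.id ℝ ℝ) ⁻¹' Set.Ioi 0 := by
    intro p hp
    simp [Set.mem_preimage, AffineMap.coe_sub, sub_pos, hp.2]
  have h2 := (h.subset hsub (convex_Ioo _ _))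
  refine h2.congr ?_
  intro p hp
  simp only [Function.comp, AffineMap.coe_sub, AffineMap.coe_const, AffineMap.coe_id,
    Pi.sub_apply, Function.const_apply, id_eq]
  rw [zpow_neg, show ((m:ℤ)+1) = ((m+1:ℕ):ℤ) by push_cast; ring, zpow_natCast, inv_pow]

/-- Convexity in `p` of the asymptotic expected contention-period duration
`T_COP(M,p) = M·(δ_idle/(L p) + (1/(L p (1−p)^{L−1}) − 1/(L p) − 1)·δ_coll + δ_succ)`
on `(0,1)`, for `L ≥ 1`, positive constants and `M ≥ 0`. -/
theorem TCOP_convex_in_p (L : ℕ) (hL : 1 ≤ L)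
    (δidle δcoll δsucc : ℝ) (hidle : 0 < δidle) (hcoll : 0 < δcoll) (hsucc : 0 < δsucc)
    (M : ℝ) (hM : 0 ≤ M) :
    ConvexOn ℝ (Set.Ioo (0 : ℝ) 1)
      (fun p : ℝ => M * (δidle / (L * p)
        + (1 / (L * p * (1 - p) ^ (L - 1)) - 1 / (L * p) - 1) * δcoll + δsucc)) := by
  have hL0 : (L:ℝ) ≠ 0 := by positivity
  -- convex building blocks
  have hinv : ConvexOn ℝ (Set.Ioo (0:ℝ) 1) (fun p : ℝ => p⁻¹) := by
    have := (convexOn_zpow (𝕜 := ℝ) (-1)).subset (Set.Ioo_subset_Ioi_self : Set.Ioo (0:ℝ) 1 ⊆ Set.Ioi 0) (convex_Ioo _ _)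
    refine this.congr fun p _ => ?_
    simp
  have hsum : ConvexOn ℝ (Set.Ioo (0:ℝ) 1)
      (fun p : ℝ => ∑ j ∈ Finset.range (L-1), ((1-p)⁻¹)^(j+1)) := by
    induction (L-1) with
    | zero => simpa using convexOn_const (0:ℝ) (convex_Ioo _ _)
    | succ n ih =>
        simp only [Finset.sum_range_succ]
        exact ih.add (conv_inv_pow n)
  have h1 : ConvexOn ℝ (Set.Ioo (0:ℝ) 1)
      (fun p : ℝ => (M*δidle/L) • p⁻¹
        + ((M*δcoll/L) • (∑ j ∈ Finset.range (L-1), ((1-p)⁻¹)^(j+1)) + M*(δsucc - δcoll))) := by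
    refine (hinv.smul (by positivity)).add ((hsum.smul (by positivity)).add
      (convexOn_const _ (convex_Ioo _ _)))
  refine h1.congr fun p hp => ?_
  obtain ⟨hp0, hp1⟩ := hp
  have hp0' : p ≠ 0 := ne_of_gt hp0
  have h1p : (1:ℝ) - p ≠ 0 := by intro h; nlinarith
  have hpow : ((1:ℝ)-p)^(L-1) ≠ 0 := pow_ne_zero _ h1p
  dsimp only
  rw [geom_aux p hp0' h1p]
  simp only [smul_eq_mul]
  rw [inv_pow]
  field_simp
  ring
end

section
/- Fix integers M and L with 1 ≤ M < L and positive real constants δ_idle, δ_coll, δ_succ. Then the function p ↦ Σ_{i=1}^{M} [ ((1−p)^{L−i}/((L−i) p (1−p)^{L−i−1}))·δ_idle + ((1 − (1−p)^{L−i})/((L−i) p (1−p)^{L−i−1}) − 1)·δ_coll + δ_succ ] is convex on the open interval (0,1). -/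
open Set Finset

lemma convexOn_finset_sum' {ι : Type*} (t : Finset ι) {s : Set ℝ} (hs : Convex ℝ s)
    (f : ι → ℝ → ℝ) (h : ∀ i ∈ t, ConvexOn ℝ s (f i)) :
    ConvexOn ℝ s (fun p => ∑ i ∈ t, f i p) := by
  classical
  induction t using Finset.cons_induction with
  | empty => simpa using convexOn_const 0 hs
  | cons a t ha ih =>
      simp only [Finset.sum_cons]
      exact (h a (Finset.mem_cons_self a t)).add
        (ih fun i hi => h i (Finset.mem_cons_of_mem hi))

lemma convexOn_inv_Ioo' : ConvexOn ℝ (Ioo (0:ℝ) 1) (fun p => p⁻¹) := by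
  have := (convexOn_zpow (𝕜 := ℝ) (-1)).subset
    (Set.Ioo_subset_Ioi_self) (convex_Ioo 0 1)
  exact this.congr (fun p _ => by simp [zpow_neg_one])

lemma convexOn_oneSub_zpow' (m : ℤ) :
    ConvexOn ℝ (Ioo (0:ℝ) 1) (fun p : ℝ => (1 - p) ^ m) := by
  have h := (convexOn_zpow (𝕜 := ℝ) m).comp_affineMap (AffineMap.lineMap (1:ℝ) (0:ℝ))
  have hsub : Ioo (0:ℝ) 1 ⊆ (AffineMap.lineMap (1:ℝ) (0:ℝ)) ⁻¹' (Ioi 0) := by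
    intro p hp
    simp [AffineMap.lineMap_apply]
    linarith [hp.2]
  exact ((h.subset hsub (convex_Ioo 0 1)).congr (fun p _ => by
    simp [Function.comp, AffineMap.lineMap_apply]
    ring_nf))

lemma tcop_term_convex (n : ℕ) (hn : 1 ≤ n) (a b c : ℝ) (ha : 0 ≤ a) (hb : 0 ≤ b) :
    ConvexOn ℝ (Ioo (0:ℝ) 1)
      (fun p : ℝ => ((1 - p) ^ n / ((n : ℝ) * p * (1 - p) ^ (n - 1))) * a
        + ((1 - (1 - p) ^ n) / ((n : ℝ) * p * (1 - p) ^ (n - 1)) - 1) * b + c) := by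
  have hn' : (0:ℝ) < (n:ℝ) := by exact_mod_cast hn
  -- the "nice" convex representative
  have h1 : ConvexOn ℝ (Ioo (0:ℝ) 1) (fun p : ℝ => (a / n) • p⁻¹) :=
    convexOn_inv_Ioo'.smul (by positivity)
  have h2 : ConvexOn ℝ (Ioo (0:ℝ) 1)
      (fun p : ℝ => ∑ j ∈ Finset.range n, (1 - p) ^ (-(j:ℤ))) :=
    convexOn_finset_sum' _ (convex_Ioo 0 1) _ (fun j _ => convexOn_oneSub_zpow' (-(j:ℤ)))
  have h3 : ConvexOn ℝ (Ioo (0:ℝ) 1)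
      (fun p : ℝ => (b / n) • ∑ j ∈ Finset.range n, (1 - p) ^ (-(j:ℤ))) :=
    h2.smul (by positivity)
  have h4 : ConvexOn ℝ (Ioo (0:ℝ) 1) (fun _ : ℝ => c - b - a / n) :=
    convexOn_const _ (convex_Ioo 0 1)
  have hnice := (h1.add h3).add h4
  refine hnice.congr ?_
  intro p hp
  obtain ⟨hp0, hp1⟩ := hp
  have hq : (0:ℝ) < 1 - p := by linarith
  have hq0 : (1:ℝ) - p ≠ 0 := ne_of_gt hq
  have hQ : ((1:ℝ) - p) ^ (n - 1) ≠ 0 := by positivity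
  have hnn : ((n:ℝ)) ≠ 0 := ne_of_gt hn'
  have e1 : ((1 - p) ^ n / ((n : ℝ) * p * (1 - p) ^ (n - 1))) = (1 - p) / ((n:ℝ) * p) := by
    have hpow : (1 - p) ^ n = (1 - p) * (1 - p) ^ (n - 1) := by
      rw [← pow_succ']
      congr 1
      omega
    rw [hpow]
    field_simp
  have hS : (∑ j ∈ Finset.range n, (1 - p) ^ (-(j:ℤ))) * (1 - p) ^ (n - 1)
      = ∑ k ∈ Finset.range n, (1 - p) ^ k := by
    rw [Finset.sum_mul]
    rw [← Finset.sum_range_reflect (fun k => (1 - p) ^ k) n]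
    apply Finset.sum_congr rfl
    intro j hj
    have hj' : j < n := Finset.mem_range.mp hj
    rw [← zpow_natCast (1 - p) (n - 1), ← zpow_add₀ hq0, ← zpow_natCast (1 - p) (n - 1 - j)]
    congr 1
    omega
  have e2 : (1 - (1 - p) ^ n) / ((n : ℝ) * p * (1 - p) ^ (n - 1))
      = (∑ j ∈ Finset.range n, (1 - p) ^ (-(j:ℤ))) / (n : ℝ) := by
    have hgeom : 1 - (1 - p) ^ n = p * ∑ k ∈ Finset.range n, (1 - p) ^ k := by
      have := geom_sum_mul (1 - p) n
      linarith [this]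
    rw [hgeom, ← hS]
    field_simp
  simp only [Pi.add_apply, smul_eq_mul]
  rw [e1, e2]
  field_simp
  ring

/-- For `1 ≤ M < L` and positive constants, the exact expected contention-period
duration `T_COP(M,·)` is convex in `p` on `(0,1)`. -/
theorem TCOP_exact_convex_in_p (M L : ℕ) (hM : 1 ≤ M) (hML : M < L)
    (δidle δcoll δsucc : ℝ) (hidle : 0 < δidle) (hcoll : 0 < δcoll) (hsucc : 0 < δsucc) :
    ConvexOn ℝ (Set.Ioo (0 : ℝ) 1)
      (fun p : ℝ => ∑ i ∈ Finset.Icc 1 M,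
        (((1 - p) ^ (L - i) / (((L - i : ℕ) : ℝ) * p * (1 - p) ^ (L - i - 1))) * δidle
          + ((1 - (1 - p) ^ (L - i)) / (((L - i : ℕ) : ℝ) * p * (1 - p) ^ (L - i - 1)) - 1)
              * δcoll
          + δsucc)) := by
  apply convexOn_finset_sum' _ (convex_Ioo 0 1)
  intro i hi
  have hiM : i ≤ M := (Finset.mem_Icc.mp hi).2
  have hn : 1 ≤ L - i := by omega
  exact tcop_term_convex (L - i) hn δidle δcoll δsucc hidle.le hcoll.le
end
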